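/- Let m ≥ 3 be an odd natural number. The equation ü − u + u^m = 0 has precisely two homoclinic solutions up to translations, namely h and −h, where h is positive, symmetric about a point z₀, monotone increasing on (−∞, z₀] and monotone decreasing on [z₀, ∞). -/

import Mathlib

open Filter Topology Set

/-- A homoclinic solution of the travelling-wave generalised KdV equation
`ü − u + u^m = 0`: a nonconstant `C²` solution with `u, u̇ → 0` as `z → ±∞`. -/
def IsHomoclinicKdV (m : ℕ) (u : ℝ → ℝ) : Prop :=
  ContDiff ℝ 2 u ∧
  (∀ z : ℝ, deriv (deriv u) z - u z + (u z) ^ m = 0) ∧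
  (∃ z w : ℝ, u z ≠ u w) ∧
  Tendsto u atTop (𝓝 0) ∧ Tendsto u atBot (𝓝 0) ∧
  Tendsto (deriv u) atTop (𝓝 0) ∧ Tendsto (deriv u) atBot (𝓝 0)


lemma bdd_of_tendsto {f : ℝ → ℝ} (hc : Continuous f) (ht : Tendsto f atTop (𝓝 0))
    (hb : Tendsto f atBot (𝓝 0)) : ∃ R : ℝ, ∀ z, |f z| ≤ R := by
  have h1 : ∀ᶠ z in atTop, |f z| < 1 := by
    simpa [Real.dist_eq] using Metric.tendsto_nhds.mp ht 1 one_pos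
  have h2 : ∀ᶠ z in atBot, |f z| < 1 := by
    simpa [Real.dist_eq] using Metric.tendsto_nhds.mp hb 1 one_pos
  obtain ⟨a, ha⟩ := eventually_atTop.mp h1
  obtain ⟨b, hbb⟩ := eventually_atBot.mp h2
  obtain ⟨C, hC⟩ := (isCompact_Icc (a := b) (b := a)).exists_bound_of_continuousOn
    hc.continuousOn
  refine ⟨max C 1, fun z => ?_⟩
  rcases le_or_gt z a with hza | hza
  · rcases le_or_gt b z with hzb | hzb
    · exact le_trans (by simpa using hC z ⟨hzb, hza⟩) (le_max_left _ _)
    · exact le_trans (hbb z hzb.le).le (le_max_right _ _)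
  · exact le_trans (ha z hza.le).le (le_max_right _ _)

lemma exists_global_max {f : ℝ → ℝ} (hc : Continuous f) (ht : Tendsto f atTop (𝓝 0))
    (hb : Tendsto f atBot (𝓝 0)) {a : ℝ} (ha : f a ≠ 0) :
    ∃ z₁, f z₁ ≠ 0 ∧ ∀ z, |f z| ≤ |f z₁| := by
  set d := |f a| with hd
  have hd0 : 0 < d := abs_pos.mpr ha
  have h1 : ∀ᶠ z in atTop, |f z| < d := by
    simpa [Real.dist_eq] using Metric.tendsto_nhds.mp ht d hd0
  have h2 : ∀ᶠ z in atBot, |f z| < d := by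
    simpa [Real.dist_eq] using Metric.tendsto_nhds.mp hb d hd0
  obtain ⟨p, hp⟩ := eventually_atTop.mp h1
  obtain ⟨q, hq⟩ := eventually_atBot.mp h2
  have hne : (Icc (min q a) (max p a)).Nonempty :=
    ⟨a, ⟨min_le_right _ _, le_max_right _ _⟩⟩
  obtain ⟨z₁, hz₁I, hz₁⟩ := isCompact_Icc.exists_isMaxOn hne
    (continuous_abs.comp hc).continuousOn
  have hmax : ∀ z ∈ Icc (min q a) (max p a), |f z| ≤ |f z₁| := fun z hz => hz₁ hz
  have hda : d ≤ |f z₁| := hmax a ⟨min_le_right _ _, le_max_right _ _⟩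
  refine ⟨z₁, fun h0 => by simp [h0] at hda; linarith, fun z => ?_⟩
  rcases le_or_gt z (max p a) with hza | hza
  · rcases le_or_gt (min q a) z with hzb | hzb
    · exact hmax z ⟨hzb, hza⟩
    · exact le_trans (hq z (lt_of_lt_of_le hzb (min_le_left _ _)).le).le hda
  · exact le_trans (hp z (le_trans (le_max_left _ _) hza.le)).le hda

lemma kdv_ode_unique (m : ℕ) (R : ℝ) (f g : ℝ → ℝ)
    (hf : ContDiff ℝ 2 f) (hg : ContDiff ℝ 2 g)
    (hfe : ∀ z, deriv (deriv f) z = f z - f z ^ m)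
    (hge : ∀ z, deriv (deriv g) z = g z - g z ^ m)
    (hbf : ∀ z, |f z| ≤ R) (hbg : ∀ z, |g z| ≤ R)
    (h0 : f 0 = g 0) (h0' : deriv f 0 = deriv g 0) : ∀ z, f z = g z := by
  have hR0 : 0 ≤ R := le_trans (abs_nonneg _) (hbf 0)
  have hC0 : (0:ℝ) ≤ 1 + m * R ^ (m - 1) := by positivity
  set C : NNReal := ⟨1 + m * R ^ (m - 1), hC0⟩ with hCdef
  have hC1 : (1:ℝ) ≤ (C : ℝ) := by
    simp only [hCdef, NNReal.coe_mk]
    have : (0:ℝ) ≤ m * R ^ (m-1) := by positivity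
    show (1:ℝ) ≤ 1 + m * R ^ (m - 1)
    linarith
  set v : ℝ → ℝ × ℝ → ℝ × ℝ := fun _ p => (p.2, p.1 - p.1 ^ m) with hv_def
  set s : ℝ → Set (ℝ × ℝ) := fun _ => {p : ℝ × ℝ | |p.1| ≤ R} with hs_def
  -- Lipschitz bound for x ↦ x - x^m on [-R, R]
  have hlip : ∀ x y : ℝ, |x| ≤ R → |y| ≤ R →
      |(x - x ^ m) - (y - y ^ m)| ≤ (C : ℝ) * |x - y| := by
    intro x y hx hy
    have := Convex.norm_image_sub_le_of_norm_hasDerivWithin_le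
      (f := fun t : ℝ => t - t ^ m) (f' := fun t : ℝ => 1 - m * t ^ (m - 1))
      (s := Icc (-R) R) (C := (C : ℝ))
      (fun t ht => ((hasDerivAt_id t).sub ((hasDerivAt_pow m t))).hasDerivWithinAt.congr_deriv
        (by ring))
      (fun t ht => by
        have h1 : |t| ≤ R := abs_le.mpr ht
        have h2 : |t ^ (m-1)| ≤ R ^ (m-1) := by
          rw [abs_pow]
          exact pow_le_pow_left₀ (abs_nonneg _) h1 _
        simp only [hCdef, NNReal.coe_mk, Real.norm_eq_abs]
        have : |1 - (m:ℝ) * t ^ (m-1)| ≤ 1 + m * |t ^ (m-1)| := by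
          rw [abs_sub_comm]
          calc |(m:ℝ) * t ^ (m-1) - 1| ≤ |(m:ℝ) * t ^ (m-1)| + |(1:ℝ)| := abs_sub _ _
          _ = m * |t ^ (m-1)| + 1 := by rw [abs_mul, abs_one, Nat.abs_cast]
          _ = 1 + m * |t ^ (m-1)| := by ring
        refine le_trans this ?_
        have : (m:ℝ) * |t ^ (m-1)| ≤ m * R ^ (m-1) :=
          mul_le_mul_of_nonneg_left h2 (Nat.cast_nonneg _)
        show 1 + (m:ℝ) * |t ^ (m-1)| ≤ 1 + m * R ^ (m - 1)
        linarith)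
      (convex_Icc _ _) (abs_le.mp hy) (abs_le.mp hx)
    simpa [Real.norm_eq_abs, abs_sub_comm] using this
  have hv : ∀ t, LipschitzOnWith C (v t) (s t) := by
    intro t
    rw [lipschitzOnWith_iff_dist_le_mul]
    rintro p hp q hq
    rw [Prod.dist_eq]
    refine max_le ?_ ?_
    · calc dist (v t p).1 (v t q).1 = dist p.2 q.2 := rfl
      _ ≤ dist p q := by rw [Prod.dist_eq]; exact le_max_right _ _
      _ ≤ (C:ℝ) * dist p q := le_mul_of_one_le_left dist_nonneg hC1
    · have : dist (v t p).2 (v t q).2 ≤ (C:ℝ) * dist p.1 q.1 := by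
        simp only [hv_def, Real.dist_eq]
        exact hlip p.1 q.1 hp hq
      refine le_trans this (mul_le_mul_of_nonneg_left (by rw [Prod.dist_eq]; exact le_max_left _ _) (by positivity))
  -- the trajectories
  have hfd : Differentiable ℝ f := hf.differentiable two_ne_zero
  have hgd : Differentiable ℝ g := hg.differentiable two_ne_zero
  have hfd2 : Differentiable ℝ (deriv f) := by
    have : ContDiff ℝ ((1:WithTop ℕ∞) + 1) f := by norm_num; exact hf
    exact (contDiff_succ_iff_deriv.mp this).2.2.differentiable one_ne_zero
  have hgd2 : Differentiable ℝ (deriv g) := by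
    have : ContDiff ℝ ((1:WithTop ℕ∞) + 1) g := by norm_num; exact hg
    exact (contDiff_succ_iff_deriv.mp this).2.2.differentiable one_ne_zero
  set F : ℝ → ℝ × ℝ := fun z => (f z, deriv f z) with hF_def
  set G : ℝ → ℝ × ℝ := fun z => (g z, deriv g z) with hG_def
  have hF : ∀ z, HasDerivAt F (v z (F z)) z := by
    intro z
    exact HasDerivAt.prodMk ((hfd z).hasDerivAt) (by
      have := (hfd2 z).hasDerivAt
      rwa [hfe z] at this)
  have hG : ∀ z, HasDerivAt G (v z (G z)) z := by
    intro z
    exact HasDerivAt.prodMk ((hgd z).hasDerivAt) (by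
      have := (hgd2 z).hasDerivAt
      rwa [hge z] at this)
  intro z
  set a : ℝ := -(|z| + 1) with ha_def
  set b : ℝ := |z| + 1 with hb_def
  have habs : 0 ≤ |z| := abs_nonneg z
  have ht₀ : (0:ℝ) ∈ Ioo a b := by constructor <;> simp [ha_def, hb_def] <;> linarith
  have hzm : z ∈ Icc a b := by
    constructor
    · simp only [ha_def]; have := neg_abs_le z; linarith
    · simp only [hb_def]; have := le_abs_self z; linarith
  have heq := ODE_solution_unique_of_mem_Icc (fun t _ => hv t) ht₀
    (fun t _ => (hF t).continuousAt.continuousWithinAt)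
    (fun t _ => hF t) (fun t _ => hbf t)
    (fun t _ => (hG t).continuousAt.continuousWithinAt)
    (fun t _ => hG t) (fun t _ => hbg t)
    (by simp only [hF_def, hG_def]; exact Prod.ext h0 h0')
  have := heq hzm
  exact congrArg Prod.fst this

noncomputable def kdvA (k : ℕ) : ℝ := ((k : ℝ) + 1) ^ (1 / (2 * (k : ℝ)) : ℝ)

noncomputable def kdvH (k : ℕ) : ℝ → ℝ :=
  fun z => kdvA k * Real.cosh ((k : ℝ) * z) ^ (-(1 / (k : ℝ)) : ℝ)

noncomputable def kdvH' (k : ℕ) : ℝ → ℝ :=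
  fun z => -kdvA k * Real.sinh ((k : ℝ) * z) * Real.cosh ((k : ℝ) * z) ^ (-(1 / (k : ℝ)) - 1 : ℝ)

lemma kdvA_pos (k : ℕ) : 0 < kdvA k := Real.rpow_pos_of_pos (by positivity) _

lemma kdvA_pow {k : ℕ} (hk : 1 ≤ k) : kdvA k ^ (2 * k) = (k : ℝ) + 1 := by
  have hK : (0:ℝ) < k := by exact_mod_cast hk
  rw [kdvA, ← Real.rpow_natCast (((k:ℝ)+1) ^ (1 / (2 * (k:ℝ)) : ℝ)) (2*k),
    ← Real.rpow_mul (by positivity)]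
  have : 1 / (2 * (k:ℝ)) * ((2*k : ℕ) : ℝ) = 1 := by
    push_cast; field_simp
  rw [this, Real.rpow_one]

lemma kdvH_pos (k : ℕ) (z : ℝ) : 0 < kdvH k z :=
  mul_pos (kdvA_pos k) (Real.rpow_pos_of_pos (Real.cosh_pos _) _)

lemma kdvH_le (k : ℕ) (z : ℝ) : kdvH k z ≤ kdvA k := by
  have h1 : Real.cosh ((k:ℝ)*z) ^ (-(1/(k:ℝ)) : ℝ) ≤ 1 :=
    Real.rpow_le_one_of_one_le_of_nonpos (Real.one_le_cosh _) (neg_nonpos.mpr (by positivity))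
  calc kdvH k z ≤ kdvA k * 1 := by
        exact mul_le_mul_of_nonneg_left h1 (kdvA_pos k).le
  _ = kdvA k := mul_one _

lemma kdvH_zero (k : ℕ) : kdvH k 0 = kdvA k := by
  simp [kdvH, Real.cosh_zero]

lemma kdvH'_zero (k : ℕ) : kdvH' k 0 = 0 := by
  simp [kdvH', Real.sinh_zero]

lemma cosh_hasDeriv (k : ℕ) (z : ℝ) :
    HasDerivAt (fun z => Real.cosh ((k:ℝ)*z)) (Real.sinh ((k:ℝ)*z) * k) z := by
  have h1 : HasDerivAt (fun z : ℝ => (k:ℝ) * z) (k:ℝ) z := by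
    simpa using (hasDerivAt_id z).const_mul (k:ℝ)
  exact (Real.hasDerivAt_cosh _).comp z h1

lemma kdvH_hasDeriv {k : ℕ} (hk : 1 ≤ k) (z : ℝ) :
    HasDerivAt (kdvH k) (kdvH' k z) z := by
  have hK : (0:ℝ) < k := by exact_mod_cast hk
  have hc : (0:ℝ) < Real.cosh ((k:ℝ)*z) := Real.cosh_pos _
  have h2 := ((cosh_hasDeriv k z).rpow_const (p := (-(1/(k:ℝ)) : ℝ))
    (Or.inl hc.ne')).const_mul (kdvA k)
  convert h2 using 1
  · rfl
  · rfl
  · rfl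
  simp only [kdvH']
  set x := Real.cosh ((k:ℝ)*z) ^ (-(1/(k:ℝ)) - 1 : ℝ) with hx
  have hk0 : (k:ℝ) ≠ 0 := hK.ne'
  field_simp

lemma deriv_kdvH {k : ℕ} (hk : 1 ≤ k) : deriv (kdvH k) = kdvH' k :=
  funext fun z => (kdvH_hasDeriv hk z).deriv

lemma kdvH'_hasDeriv {k : ℕ} (hk : 1 ≤ k) (z : ℝ) :
    HasDerivAt (kdvH' k) (kdvH k z - kdvH k z ^ (2*k+1)) z := by
  have hK : (0:ℝ) < k := by exact_mod_cast hk
  set K : ℝ := (k:ℝ)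
  set p : ℝ := -(1/(k:ℝ)) with hp_def
  set c : ℝ := Real.cosh ((k:ℝ)*z) with hc_def
  set s : ℝ := Real.sinh ((k:ℝ)*z) with hs_def
  have hc : (0:ℝ) < c := Real.cosh_pos _
  -- derivative of  z ↦ (-A * sinh(Kz)) * (cosh(Kz) ^ (p-1))
  have h1 : HasDerivAt (fun z => -kdvA k * Real.sinh ((k:ℝ)*z)) (-kdvA k * (Real.cosh ((k:ℝ)*z) * k)) z := by
    have hlin : HasDerivAt (fun z : ℝ => (k:ℝ) * z) (k:ℝ) z := by
      simpa using (hasDerivAt_id z).const_mul (k:ℝ)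
    exact ((Real.hasDerivAt_sinh _).comp z hlin).const_mul _
  have h2 : HasDerivAt (fun z => Real.cosh ((k:ℝ)*z) ^ (p - 1 : ℝ))
      (Real.sinh ((k:ℝ)*z) * k * (p-1) * Real.cosh ((k:ℝ)*z) ^ (p - 1 - 1 : ℝ)) z :=
    (cosh_hasDeriv k z).rpow_const (Or.inl hc.ne')
  have h3 := h1.mul h2
  convert h3 using 1
  · rfl
  · rfl
  · rfl
  -- now the algebraic identity
  have f1 : c ^ (p - 1 : ℝ) = c ^ p / c := by
    rw [Real.rpow_sub hc, Real.rpow_one]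
  have f2 : c ^ (p - 1 - 1 : ℝ) = c ^ p / c^2 := by
    have : (p - 1 - 1 : ℝ) = p - 2 := by ring
    rw [this, Real.rpow_sub hc, show ((2:ℝ) = ((2:ℕ):ℝ)) by norm_num, Real.rpow_natCast]
  have f3 : s^2 = c^2 - 1 := by
    rw [hs_def, hc_def, Real.sinh_sq]
  have f4 : kdvH k z ^ (2*k+1) = ((k:ℝ)+1) * kdvA k * c ^ p / c^2 := by
    rw [kdvH, mul_pow, ← Real.rpow_natCast (c ^ p) (2*k+1), ← Real.rpow_mul hc.le]
    have he : p * ((2*k+1 : ℕ) : ℝ) = p - 2 := by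
      rw [hp_def]; push_cast; field_simp; ring
    rw [he, Real.rpow_sub hc, show ((2:ℝ) = ((2:ℕ):ℝ)) by norm_num, Real.rpow_natCast,
      pow_succ, kdvA_pow hk]
    ring
  have hk0 : (k:ℝ) ≠ 0 := hK.ne'
  rw [f4]
  rw [← hc_def, ← hs_def]
  simp only [kdvH, kdvH', f1, f2]
  set cp := c ^ p with hcp
  rw [hp_def]
  field_simp
  linear_combination (-(kdvA k * (1+(k:ℝ)) * cp)) * f3
lemma kdvH_contDiff (k : ℕ) : ContDiff ℝ 2 (kdvH k) := by
  have h1 : ContDiff ℝ 2 (fun z => Real.cosh ((k:ℝ)*z)) :=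
    Real.contDiff_cosh.comp (contDiff_const.mul contDiff_id)
  exact contDiff_const.mul (h1.rpow_const_of_ne (fun x => (Real.cosh_pos _).ne'))

lemma kdv_cosh_tendsto_atTop {k : ℕ} (hk : 1 ≤ k) :
    Tendsto (fun z => Real.cosh ((k:ℝ)*z)) atTop atTop := by
  have hK : (0:ℝ) < k := by exact_mod_cast hk
  have hle : ∀ z : ℝ, Real.exp ((k:ℝ)*z) / 2 ≤ Real.cosh ((k:ℝ)*z) := fun z => by
    rw [Real.cosh_eq]; have := (Real.exp_pos (-((k:ℝ)*z))).le; linarith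
  exact tendsto_atTop_mono hle
    ((Real.tendsto_exp_atTop.comp (tendsto_id.const_mul_atTop hK)).atTop_div_const two_pos)

lemma kdv_cosh_tendsto_atBot {k : ℕ} (hk : 1 ≤ k) :
    Tendsto (fun z => Real.cosh ((k:ℝ)*z)) atBot atTop := by
  have hK : (0:ℝ) < k := by exact_mod_cast hk
  have hle : ∀ z : ℝ, Real.exp (-((k:ℝ)*z)) / 2 ≤ Real.cosh ((k:ℝ)*z) := fun z => by
    rw [Real.cosh_eq]; have := (Real.exp_pos ((k:ℝ)*z)).le; linarith
  have h2 : Tendsto (fun z : ℝ => -((k:ℝ)*z)) atBot atTop := by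
    have := (tendsto_id (α := ℝ)).const_mul_atBot hK
    exact tendsto_neg_atBot_atTop.comp this
  exact tendsto_atTop_mono hle
    ((Real.tendsto_exp_atTop.comp h2).atTop_div_const two_pos)

lemma kdvH_tendsto_atTop {k : ℕ} (hk : 1 ≤ k) : Tendsto (kdvH k) atTop (𝓝 0) := by
  have hK : (0:ℝ) < k := by exact_mod_cast hk
  have h1 : Tendsto (fun x : ℝ => x ^ (-(1/(k:ℝ)) : ℝ)) atTop (𝓝 0) := by
    have := tendsto_rpow_neg_atTop (y := 1/(k:ℝ)) (by positivity)
    simpa using this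
  have h2 : Tendsto (fun z => kdvA k * Real.cosh ((k:ℝ)*z) ^ (-(1/(k:ℝ)) : ℝ)) atTop
      (𝓝 (kdvA k * 0)) := (h1.comp (kdv_cosh_tendsto_atTop hk)).const_mul (kdvA k)
  rw [mul_zero] at h2
  exact h2

lemma kdvH_tendsto_atBot {k : ℕ} (hk : 1 ≤ k) : Tendsto (kdvH k) atBot (𝓝 0) := by
  have hK : (0:ℝ) < k := by exact_mod_cast hk
  have h1 : Tendsto (fun x : ℝ => x ^ (-(1/(k:ℝ)) : ℝ)) atTop (𝓝 0) := by
    have := tendsto_rpow_neg_atTop (y := 1/(k:ℝ)) (by positivity)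
    simpa using this
  have h2 : Tendsto (fun z => kdvA k * Real.cosh ((k:ℝ)*z) ^ (-(1/(k:ℝ)) : ℝ)) atBot
      (𝓝 (kdvA k * 0)) := (h1.comp (kdv_cosh_tendsto_atBot hk)).const_mul (kdvA k)
  rw [mul_zero] at h2
  exact h2

lemma kdvH'_abs_le {k : ℕ} (hk : 1 ≤ k) (z : ℝ) : |kdvH' k z| ≤ kdvH k z := by
  have hK : (0:ℝ) < k := by exact_mod_cast hk
  set c : ℝ := Real.cosh ((k:ℝ)*z) with hc_def
  set s : ℝ := Real.sinh ((k:ℝ)*z) with hs_def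
  have hc : (0:ℝ) < c := Real.cosh_pos _
  have hs : |s| ≤ c := by
    have h1 : s^2 = c^2 - 1 := Real.sinh_sq _
    nlinarith [abs_nonneg s, sq_abs s]
  have f1 : c ^ (-(1/(k:ℝ)) - 1 : ℝ) = c ^ (-(1/(k:ℝ)) : ℝ) / c := by
    rw [Real.rpow_sub hc, Real.rpow_one]
  have hx : (0:ℝ) < c ^ (-(1/(k:ℝ)) : ℝ) := Real.rpow_pos_of_pos hc _
  have : |kdvH' k z| = kdvA k * |s| * (c ^ (-(1/(k:ℝ)) : ℝ) / c) := by
    rw [kdvH', f1, abs_mul, abs_mul, abs_neg, abs_of_pos (kdvA_pos k),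
      abs_of_pos (div_pos hx hc)]
  rw [this, kdvH]
  rw [div_eq_mul_inv, ← mul_assoc]
  have h2 : kdvA k * |s| * c ^ (-(1/(k:ℝ)) : ℝ) * c⁻¹ ≤ kdvA k * c * c ^ (-(1/(k:ℝ)) : ℝ) * c⁻¹ := by
    gcongr
    exact (kdvA_pos k).le
  refine le_trans h2 (le_of_eq ?_)
  field_simp
  ring

lemma kdvH_symm (k : ℕ) (z : ℝ) : kdvH k (0 + z) = kdvH k (0 - z) := by
  simp [kdvH, Real.cosh_neg, mul_neg]

lemma kdvH_monoOn {k : ℕ} (hk : 1 ≤ k) : MonotoneOn (kdvH k) (Iic 0) := by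
  have hK : (0:ℝ) < k := by exact_mod_cast hk
  refine monotoneOn_of_deriv_nonneg (convex_Iic 0)
    (kdvH_contDiff k).continuous.continuousOn
    (fun z _ => ((kdvH_hasDeriv hk z).differentiableAt).differentiableWithinAt) ?_
  intro z hz
  rw [interior_Iic] at hz
  rw [(kdvH_hasDeriv hk z).deriv]
  have hs : Real.sinh ((k:ℝ)*z) ≤ 0 := by
    rw [Real.sinh_nonpos_iff]
    exact mul_nonpos_of_nonneg_of_nonpos hK.le hz.le
  have hx : (0:ℝ) < Real.cosh ((k:ℝ)*z) ^ (-(1/(k:ℝ)) - 1 : ℝ) :=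
    Real.rpow_pos_of_pos (Real.cosh_pos _) _
  rw [kdvH']
  have : 0 ≤ -kdvA k * Real.sinh ((k:ℝ)*z) := by nlinarith [kdvA_pos k]
  exact mul_nonneg this hx.le

lemma kdvH_antiOn {k : ℕ} (hk : 1 ≤ k) : AntitoneOn (kdvH k) (Ici 0) := by
  have hK : (0:ℝ) < k := by exact_mod_cast hk
  refine antitoneOn_of_deriv_nonpos (convex_Ici 0)
    (kdvH_contDiff k).continuous.continuousOn
    (fun z _ => ((kdvH_hasDeriv hk z).differentiableAt).differentiableWithinAt) ?_
  intro z hz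
  rw [interior_Ici] at hz
  rw [(kdvH_hasDeriv hk z).deriv]
  have hs : 0 ≤ Real.sinh ((k:ℝ)*z) := by
    rw [Real.sinh_nonneg_iff]
    exact mul_nonneg hK.le hz.le
  have hx : (0:ℝ) < Real.cosh ((k:ℝ)*z) ^ (-(1/(k:ℝ)) - 1 : ℝ) :=
    Real.rpow_pos_of_pos (Real.cosh_pos _) _
  rw [kdvH']
  have : -kdvA k * Real.sinh ((k:ℝ)*z) ≤ 0 :=
    mul_nonpos_of_nonpos_of_nonneg (by linarith [kdvA_pos k]) hs
  exact mul_nonpos_of_nonpos_of_nonneg this hx.le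

lemma kdvH_deriv_tendsto_atTop {k : ℕ} (hk : 1 ≤ k) :
    Tendsto (deriv (kdvH k)) atTop (𝓝 0) := by
  rw [deriv_kdvH hk]
  exact squeeze_zero_norm (fun z => kdvH'_abs_le hk z) (kdvH_tendsto_atTop hk)

lemma kdvH_deriv_tendsto_atBot {k : ℕ} (hk : 1 ≤ k) :
    Tendsto (deriv (kdvH k)) atBot (𝓝 0) := by
  rw [deriv_kdvH hk]
  exact squeeze_zero_norm (fun z => kdvH'_abs_le hk z) (kdvH_tendsto_atBot hk)

lemma kdvH_nonconst {k : ℕ} (hk : 1 ≤ k) : ∃ z w : ℝ, kdvH k z ≠ kdvH k w := by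
  have h1 : ∀ᶠ z in atTop, kdvH k z < kdvA k :=
    (kdvH_tendsto_atTop hk).eventually (gt_mem_nhds (kdvA_pos k))
  obtain ⟨z, hz⟩ := h1.exists
  exact ⟨0, z, by rw [kdvH_zero]; exact fun h => absurd h.symm (ne_of_lt hz)⟩

lemma kdvH_isHomoclinic {k : ℕ} (hk : 1 ≤ k) : IsHomoclinicKdV (2*k+1) (kdvH k) := by
  refine ⟨kdvH_contDiff k, fun z => ?_, kdvH_nonconst hk, kdvH_tendsto_atTop hk,
    kdvH_tendsto_atBot hk, kdvH_deriv_tendsto_atTop hk, kdvH_deriv_tendsto_atBot hk⟩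
  rw [deriv_kdvH hk, (kdvH'_hasDeriv hk z).deriv]
  ring

lemma kdv_energy (m : ℕ) {u : ℝ → ℝ} (hu : IsHomoclinicKdV m u) (z : ℝ) :
    (deriv u z)^2/2 - (u z)^2/2 + (u z)^(m+1)/((m:ℝ)+1) = 0 := by
  obtain ⟨hC, heq, -, ht, -, ht', -⟩ := hu
  have hm1 : (0:ℝ) < (m:ℝ) + 1 := by positivity
  have hd : Differentiable ℝ u := hC.differentiable two_ne_zero
  have hd2 : Differentiable ℝ (deriv u) := by
    have : ContDiff ℝ ((1:WithTop ℕ∞) + 1) u := by norm_num; exact hC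
    exact (contDiff_succ_iff_deriv.mp this).2.2.differentiable one_ne_zero
  set E : ℝ → ℝ := fun z => (deriv u z)^2/2 - (u z)^2/2 + (u z)^(m+1)/((m:ℝ)+1) with hE_def
  have hE : ∀ z, HasDerivAt E 0 z := by
    intro z
    have h1 : HasDerivAt u (deriv u z) z := (hd z).hasDerivAt
    have h2 : HasDerivAt (deriv u) (deriv (deriv u) z) z := (hd2 z).hasDerivAt
    have h4 := (((h2.pow 2).div_const 2).sub ((h1.pow 2).div_const 2)).add
      ((h1.pow (m+1)).div_const ((m:ℝ)+1))
    convert h4 using 1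
    · rfl
    · rfl
    · rfl
    have hds : deriv (deriv u) z = u z - u z ^ m := by linarith [heq z]
    rw [hds]
    simp only [Nat.add_sub_cancel, pow_one]
    push_cast
    field_simp
    ring
  have hEc : ∀ z w : ℝ, E z = E w :=
    is_const_of_deriv_eq_zero (fun z => (hE z).differentiableAt) (fun z => (hE z).deriv)
  have hlim : Tendsto E atTop (𝓝 ((0:ℝ)^2/2 - (0:ℝ)^2/2 + (0:ℝ)^(m+1)/((m:ℝ)+1))) :=
    (((ht'.pow 2).div_const 2).sub ((ht.pow 2).div_const 2)).add
      ((ht.pow (m+1)).div_const ((m:ℝ)+1))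
  have hlim0 : Tendsto E atTop (𝓝 0) := by
    convert hlim using 2
    norm_num
  have hconst : Tendsto E atTop (𝓝 (E z)) :=
    tendsto_const_nhds.congr (fun w => (hEc z w))
  have : E z = 0 := tendsto_nhds_unique hconst hlim0
  exact this

/-- For odd `m ≥ 3` the equation `ü − u + u^m = 0` has precisely two homoclinic
solutions up to translations, namely `h` and `−h`, where `h` is positive,
symmetric about a point `z₀`, monotone increasing on `(−∞, z₀]` and monotone
decreasing on `[z₀, ∞)`. -/
theorem kdv_homoclinic_odd (m : ℕ) (hm : 3 ≤ m) (hmodd : Odd m) :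
    ∃ (h : ℝ → ℝ) (z₀ : ℝ),
      IsHomoclinicKdV m h ∧
      IsHomoclinicKdV m (fun z => -h z) ∧
      (∀ z : ℝ, 0 < h z) ∧
      (∀ z : ℝ, h (z₀ + z) = h (z₀ - z)) ∧
      MonotoneOn h (Set.Iic z₀) ∧
      AntitoneOn h (Set.Ici z₀) ∧
      (∀ u : ℝ → ℝ, IsHomoclinicKdV m u →
        (∃ c : ℝ, u = fun z => h (z + c)) ∨ (∃ c : ℝ, u = fun z => -h (z + c))) := by
  obtain ⟨k', hk'⟩ := hmodd
  have hkm : m = 2 * k' + 1 := by omega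
  subst hkm
  set k := k' with hk_def
  have hk : 1 ≤ k := by omega
  have hK : (0:ℝ) < k := by exact_mod_cast hk
  have hkodd : Odd (2*k+1) := ⟨k, by ring⟩
  set h := kdvH k with hh_def
  have hhom := kdvH_isHomoclinic hk
  -- homoclinicity of -h
  have hderivneg : deriv (fun z => -h z) = fun z => -(deriv h z) :=
    funext fun z => deriv.neg
  have hneghom : IsHomoclinicKdV (2*k+1) (fun z => -h z) := by
    obtain ⟨hC, heq, ⟨z, w, hzw⟩, ht, hb, ht', hb'⟩ := hhom
    refine ⟨hC.neg, fun z => ?_, ⟨z, w, fun hc => hzw (neg_injective (by simpa using hc))⟩, ?_, ?_, ?_, ?_⟩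
    · rw [hderivneg]
      have : deriv (fun z => -(deriv h z)) z = -(deriv (deriv h) z) := deriv.neg
      rw [this, hkodd.neg_pow]
      have := heq z
      beta_reduce
      linarith
    · simpa using ht.neg
    · simpa using hb.neg
    · rw [hderivneg]; simpa using ht'.neg
    · rw [hderivneg]; simpa using hb'.neg
  refine ⟨h, 0, hhom, hneghom, kdvH_pos k, kdvH_symm k, kdvH_monoOn hk,
    kdvH_antiOn hk, ?_⟩
  -- uniqueness
  intro u hu
  obtain ⟨huC, hueq, ⟨zz, ww, hzw⟩, hut, hub, hut', hub'⟩ := hu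
  have hud : Differentiable ℝ u := huC.differentiable two_ne_zero
  -- u is somewhere nonzero
  have hex : ∃ a, u a ≠ 0 := by
    by_contra hcon
    push_neg at hcon
    exact hzw (by rw [hcon zz, hcon ww])
  obtain ⟨a, ha⟩ := hex
  -- global max of |u|
  obtain ⟨z₁, hz₁ne, hz₁max⟩ :=
    exists_global_max huC.continuous hut hub ha
  -- the derivative vanishes at z₁
  have hz₁d : deriv u z₁ = 0 := by
    rcases lt_or_gt_of_ne hz₁ne with hneg | hpos
    · have hmin : IsLocalMin u z₁ := by
        refine Filter.Eventually.of_forall (fun z => ?_)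
        have h1 := hz₁max z
        have h2 : |u z₁| = -(u z₁) := abs_of_neg hneg
        have h3 := neg_abs_le (u z)
        rw [h2] at h1
        linarith
      exact hmin.deriv_eq_zero
    · have hmax : IsLocalMax u z₁ := by
        refine Filter.Eventually.of_forall (fun z => ?_)
        have h1 := hz₁max z
        have h2 : |u z₁| = u z₁ := abs_of_pos hpos
        have h3 := le_abs_self (u z)
        rw [h2] at h1
        linarith
      exact hmax.deriv_eq_zero
  -- energy at z₁ : |u z₁| = kdvA k
  have hE := kdv_energy (2*k+1) ⟨huC, hueq, ⟨zz, ww, hzw⟩, hut, hub, hut', hub'⟩ z₁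
  rw [hz₁d] at hE
  set u₁ := u z₁ with hu₁_def
  have hcast : ((2*k+1 : ℕ) : ℝ) + 1 = 2*(k:ℝ) + 2 := by push_cast; ring
  have hE1 : u₁ ^ (2*k+1+1) = ((k:ℝ)+1) * u₁^2 := by
    rw [hcast] at hE
    have h2 : u₁ ^ (2*k+1+1) / (2*(k:ℝ)+2) = u₁^2/2 := by
      norm_num at hE
      linarith
    have h3 : (0:ℝ) < 2*(k:ℝ)+2 := by positivity
    field_simp at h2
    nlinarith [h2]
  have hE2 : u₁ ^ (2*k) = (k:ℝ) + 1 := by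
    have he : u₁ ^ (2*k+1+1) = u₁^(2*k) * u₁^2 := by
      rw [← pow_add]
    rw [he] at hE1
    have hne2 : u₁^2 ≠ 0 := pow_ne_zero 2 hz₁ne
    field_simp at hE1
    exact hE1
  have habs : |u₁| = kdvA k := by
    have h1 : |u₁| ^ (2*k) = kdvA k ^ (2*k) := by
      rw [kdvA_pow hk, ← abs_pow, hE2]
      rw [abs_of_pos (by positivity : (0:ℝ) < (k:ℝ)+1)]
    have h2 : (2*k) ≠ 0 := by omega
    exact (pow_left_strictMonoOn₀ h2).injOn (abs_nonneg u₁) (kdvA_pos k).le h1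
  -- bound for u
  obtain ⟨Ru, hRu⟩ := bdd_of_tendsto huC.continuous hut hub
  set R : ℝ := max Ru (kdvA k) with hR_def
  have hbu : ∀ z, |u z| ≤ R := fun z => le_trans (hRu z) (le_max_left _ _)
  have hbh : ∀ z, |h z| ≤ R := fun z => by
    rw [abs_of_pos (kdvH_pos k z)]
    exact le_trans (kdvH_le k z) (le_max_right _ _)
  -- h data
  have hhC : ContDiff ℝ 2 h := kdvH_contDiff k
  have hheq : ∀ z, deriv (deriv h) z = h z - h z ^ (2*k+1) := by
    intro z
    rw [deriv_kdvH hk]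
    exact (kdvH'_hasDeriv hk z).deriv
  have hh0 : h 0 = kdvA k := kdvH_zero k
  have hh0' : deriv h 0 = 0 := by rw [deriv_kdvH hk]; exact kdvH'_zero k
  -- the shifted solution
  have hshiftC : ContDiff ℝ 2 (fun z => u (z + z₁)) :=
    huC.comp (contDiff_id.add contDiff_const)
  have hshiftd : deriv (fun z => u (z + z₁)) = fun z => deriv u (z + z₁) :=
    funext fun z => deriv_comp_add_const _ _ _
  have hshifteq : ∀ z, deriv (deriv (fun z => u (z + z₁))) z =
      u (z + z₁) - u (z + z₁) ^ (2*k+1) := by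
    intro z
    rw [hshiftd]
    have : deriv (fun z => deriv u (z + z₁)) z = deriv (deriv u) (z + z₁) :=
      deriv_comp_add_const _ _ _
    rw [this]
    linarith [hueq (z + z₁)]
  rcases abs_eq (kdvA_pos k).le |>.mp habs with hA | hA
  · -- u z₁ = kdvA k : u is a translate of h
    left
    refine ⟨-z₁, ?_⟩
    have key := kdv_ode_unique (2*k+1) R (fun z => u (z + z₁)) h
      hshiftC hhC hshifteq hheq (fun z => hbu (z + z₁)) hbh
      (by simpa [hh0] using hA)
      (by rw [hshiftd, hh0']; simpa using hz₁d)
    funext z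
    have := key (z - z₁)
    simpa [sub_add_cancel, ← sub_eq_add_neg] using this
  · -- u z₁ = -kdvA k : -u is a translate of h
    right
    refine ⟨-z₁, ?_⟩
    have hnC : ContDiff ℝ 2 (fun z => -u (z + z₁)) := hshiftC.neg
    have hnd : deriv (fun z => -u (z + z₁)) = fun z => -(deriv u (z + z₁)) := by
      have e1 : deriv (fun z => -u (z + z₁)) = fun z => -(deriv (fun z => u (z + z₁)) z) :=
        funext fun z => deriv.neg
      rw [e1, hshiftd]
    have hneq : ∀ z, deriv (deriv (fun z => -u (z + z₁))) z =
        (fun z => -u (z + z₁)) z - ((fun z => -u (z + z₁)) z) ^ (2*k+1) := by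
      intro z
      rw [hnd]
      have e2 : deriv (fun z => -(deriv u (z + z₁))) z =
          -(deriv (fun z => deriv u (z + z₁)) z) := deriv.neg
      have e3 : deriv (fun z => deriv u (z + z₁)) z = deriv (deriv u) (z + z₁) :=
        deriv_comp_add_const _ _ _
      rw [e2, e3]
      simp only [hkodd.neg_pow]
      have := hueq (z + z₁)
      linarith
    have key := kdv_ode_unique (2*k+1) R (fun z => -u (z + z₁)) h
      hnC hhC hneq hheq (fun z => by rw [abs_neg]; exact hbu (z + z₁)) hbh
      (by rw [hh0]; show -u (0 + z₁) = kdvA k; rw [zero_add, ← hu₁_def]; linarith)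
      (by rw [hnd, hh0']; simpa using hz₁d)
    funext z
    have := key (z - z₁)
    simp only [sub_add_cancel] at this
    rw [← sub_eq_add_neg]
    linarith
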